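/- arXiv:0911.1501 — 2 statements merged into one kernel-verified Lean document; each statement's English description precedes it below -/
import Mathlib

section
/- Let f_0, f_1, f_2, f_3 ∈ ℝ² be a balanced system of forces at the points x_0, x_1, x_2, x_3 ∈ ℝ². Then for every ε > 0 and every finite set S ⊆ ℝ² there exist a point y_* in the ε-neighborhood of the convex hull of {x_0, x_1, x_2, x_3} with y_* ∉ S ∪ {x_0, x_1, x_2, x_3}, and two distinct indices i, j ∈ {0,1,2,3}, such that f_i ∧ x_i + f_j ∧ x_j − (f_i + f_j) ∧ y_* = 0; that is, the three forces f_i, f_j and −(f_i + f_j) supported at the points x_i, x_j, y_* form a balanced system. -/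
open scoped BigOperators
open Matrix

noncomputable section

/-- The Moore–Penrose pseudoinverse of a real square matrix, characterized by the
four Penrose conditions (it exists and is unique for every real matrix). -/
noncomputable def mpinv {n : Type*} [Fintype n] [DecidableEq n]
    (A : Matrix n n ℝ) : Matrix n n ℝ :=
  @dite _
    (∃ X : Matrix n n ℝ,
      A * X * A = A ∧ X * A * X = X ∧ (A * X)ᵀ = A * X ∧ (X * A)ᵀ = X * A)
    (Classical.propDecidable _) (fun h => h.choose) (fun _ => 0)

/-- Euclidean norm of a vector in `Fin d → ℝ`. -/
noncomputable def euclNorm {d : ℕ} (v : Fin d → ℝ) : ℝ := Real.sqrt (∑ a, v a ^ 2)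

/-- Unit vector pointing from `p` towards `q`. -/
noncomputable def unitDir {d : ℕ} (p q : Fin d → ℝ) : Fin d → ℝ :=
  fun a => (euclNorm (q - p))⁻¹ * (q a - p a)

/-- Stiffness matrix of a spring network with node positions `x` and spring
constants `k`: the `d × d` off-diagonal block coupling nodes `i ≠ j` is
`-k i j • n_{ij} n_{ij}ᵀ` and the `i`-th diagonal block is
`∑ j ≠ i, k i j • n_{ij} n_{ij}ᵀ`. -/
noncomputable def stiffness {d : ℕ} {ι : Type*} [Fintype ι] [DecidableEq ι]
    (x : ι → Fin d → ℝ) (k : ι → ι → ℝ) :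
    Matrix (ι × Fin d) (ι × Fin d) ℝ :=
  Matrix.of fun p q =>
    if p.1 = q.1 then
      ∑ j ∈ Finset.univ.filter (fun j => j ≠ p.1),
        k p.1 j * (unitDir (x p.1) (x j) p.2 * unitDir (x p.1) (x j) q.2)
    else
      -(k p.1 q.1 * (unitDir (x p.1) (x q.1) p.2 * unitDir (x p.1) (x q.1) q.2))

/-- `(x, k)` is a spring network: nodes are at distinct positions and the spring
constants are symmetric and nonnegative. -/
def IsSpringNetwork {d : ℕ} {ι : Type*} (x : ι → Fin d → ℝ) (k : ι → ι → ℝ) : Prop :=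
  Function.Injective x ∧ (∀ i j, k i j = k j i) ∧ (∀ i j, 0 ≤ k i j)

/-- The block of a matrix indexed by `(nodes × Fin d)` selected by the node
maps `f` and `g`. -/
def blk {d : ℕ} {ι κ₁ κ₂ : Type*} (K : Matrix (ι × Fin d) (ι × Fin d) ℝ)
    (f : κ₁ → ι) (g : κ₂ → ι) : Matrix (κ₁ × Fin d) (κ₂ × Fin d) ℝ :=
  K.submatrix (Prod.map f id) (Prod.map g id)

/-- Generalized Schur complement `K_BB - K_BI K_II† K_IB` eliminating the
interior nodes `I`. -/
noncomputable def schurResp {d : ℕ} {B I : Type*} [Fintype B] [Fintype I]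
    [DecidableEq B] [DecidableEq I]
    (K : Matrix ((B ⊕ I) × Fin d) ((B ⊕ I) × Fin d) ℝ) :
    Matrix (B × Fin d) (B × Fin d) ℝ :=
  blk K Sum.inl Sum.inl -
    blk K Sum.inl Sum.inr * mpinv (blk K Sum.inr Sum.inr) * blk K Sum.inr Sum.inl

/-- Static response matrix at the terminals `B` of the spring network `(x, k)`
with interior nodes `I`. -/
noncomputable def staticResponse {d : ℕ} {B I : Type*} [Fintype B] [Fintype I]
    [DecidableEq B] [DecidableEq I]
    (x : (B ⊕ I) → Fin d → ℝ) (k : (B ⊕ I) → (B ⊕ I) → ℝ) :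
    Matrix (B × Fin d) (B × Fin d) ℝ :=
  schurResp (stiffness x k)

/-- Balanced system of forces `f` supported at the points `x`: the total force
vanishes and the total torque vanishes (the torque being recorded as the
antisymmetric matrix `x_i ∧ f_i`, which for `d = 2` is equivalent to the scalar
wedge `u ∧ v = u 0 * v 1 - u 1 * v 0` and for `d = 3` to the cross product). -/
def IsBalanced {d : ℕ} {ι : Type*} [Fintype ι]
    (x f : ι → Fin d → ℝ) : Prop :=
  (∀ a, ∑ i, f i a = 0) ∧ ∀ a b, ∑ i, (x i a * f i b - x i b * f i a) = 0

/-- Planar wedge product. -/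
def wedge2 (u v : Fin 2 → ℝ) : ℝ := u 0 * v 1 - u 1 * v 0

/-- Cross product in `ℝ³`. -/
def cross3 (u v : Fin 3 → ℝ) : Fin 3 → ℝ :=
  ![u 1 * v 2 - u 2 * v 1, u 2 * v 0 - u 0 * v 2, u 0 * v 1 - u 1 * v 0]

/-- The `ε`-neighborhood `{y | dist (y, C) ≤ ε}` of a set `C` (for a closed set
`C`, membership is equivalent to being within Euclidean distance `ε` of some
point of `C`). -/
def epsNbhd {d : ℕ} (C : Set (Fin d → ℝ)) (ε : ℝ) : Set (Fin d → ℝ) :=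
  {y | ∃ z ∈ C, euclNorm (y - z) ≤ ε}

/-- Combine terminal and interior displacements into a displacement of all
nodes. -/
def glue {d : ℕ} {B I : Type*} (uB : B × Fin d → ℝ) (uI : I × Fin d → ℝ) :
    (B ⊕ I) × Fin d → ℝ :=
  fun p => Sum.elim (fun b => uB (b, p.2)) (fun i => uI (i, p.2)) p.1

/-- The reduced stiffness matrix `K̃` at the nodes `B ⊕ J` of a spring–mass
network with massless interior nodes `L`, obtained by eliminating `L`. -/
noncomputable def dynKtilde {d : ℕ} {B J L : Type*} [Fintype B] [Fintype J] [Fintype L]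
    [DecidableEq B] [DecidableEq J] [DecidableEq L]
    (x : ((B ⊕ J) ⊕ L) → Fin d → ℝ) (k : ((B ⊕ J) ⊕ L) → ((B ⊕ J) ⊕ L) → ℝ) :
    Matrix ((B ⊕ J) × Fin d) ((B ⊕ J) × Fin d) ℝ :=
  schurResp (stiffness x k)

/-- The diagonal mass matrix `M_JJ` of the interior nodes with mass. -/
noncomputable def massJJ {d : ℕ} {B J L : Type*} [Fintype J] [DecidableEq J]
    (m : (B ⊕ J) ⊕ L → ℝ) : Matrix (J × Fin d) (J × Fin d) ℝ :=
  Matrix.diagonal fun p => m (Sum.inl (Sum.inr p.1))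

/-- The diagonal mass matrix `M_BB` of the terminal nodes. -/
noncomputable def massBB {d : ℕ} {B J L : Type*} [Fintype B] [DecidableEq B]
    (m : (B ⊕ J) ⊕ L → ℝ) : Matrix (B × Fin d) (B × Fin d) ℝ :=
  Matrix.diagonal fun p => m (Sum.inl (Sum.inl p.1))

/-- Dynamic response function
`W(ω) = K̃_BB - ω² M_BB - K̃_BJ (K̃_JJ - ω² M_JJ)⁻¹ K̃_JB` of a spring–mass
network with terminals `B`, interior nodes `J` carrying the masses `m` and
massless interior nodes `L`. -/
noncomputable def dynResponse {d : ℕ} {B J L : Type*} [Fintype B] [Fintype J] [Fintype L]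
    [DecidableEq B] [DecidableEq J] [DecidableEq L]
    (x : ((B ⊕ J) ⊕ L) → Fin d → ℝ) (k : ((B ⊕ J) ⊕ L) → ((B ⊕ J) ⊕ L) → ℝ)
    (m : (B ⊕ J) ⊕ L → ℝ) (ω : ℝ) : Matrix (B × Fin d) (B × Fin d) ℝ :=
  blk (dynKtilde x k) Sum.inl Sum.inl - ω ^ 2 • massBB m -
    blk (dynKtilde x k) Sum.inl Sum.inr *
      (blk (dynKtilde x k) Sum.inr Sum.inr - ω ^ 2 • massJJ m)⁻¹ *
      blk (dynKtilde x k) Sum.inr Sum.inl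

/-- value of the pairing function `φ_p` at vertex `m` -/
def Vv (x f : Fin 4 → Fin 2 → ℝ) (p m : Fin 4) : ℝ :=
  wedge2 (f 0 + f p) (x m) - (wedge2 (f 0) (x 0) + wedge2 (f p) (x p))

lemma euclNorm_pos' {v : Fin 2 → ℝ} (hv : v ≠ 0) : 0 < euclNorm v := by
  obtain ⟨a, ha⟩ := Function.ne_iff.mp hv
  have h1 : 0 < v a ^ 2 := by
    have h := abs_pos.mpr ha
    calc (0:ℝ) < |v a| ^ 2 := pow_pos h 2
    _ = v a ^ 2 := sq_abs _
  have h2 : 0 < ∑ b, v b ^ 2 :=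
    Finset.sum_pos' (fun b _ => sq_nonneg _) ⟨a, Finset.mem_univ a, h1⟩
  exact Real.sqrt_pos.mpr h2

lemma euclNorm_smul' (t : ℝ) (v : Fin 2 → ℝ) : euclNorm (t • v) = |t| * euclNorm v := by
  unfold euclNorm
  have h : ∑ a, (t • v) a ^ 2 = t ^ 2 * ∑ a, v a ^ 2 := by
    simp [Finset.mul_sum, mul_pow]
    ring
  rw [h, Real.sqrt_mul (sq_nonneg t), Real.sqrt_sq_eq_abs]

lemma pick_point (z v : Fin 2 → ℝ) (hv : v ≠ 0) (C : Set (Fin 2 → ℝ)) (hzC : z ∈ C)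
    (ε : ℝ) (hε : 0 < ε) (T : Set (Fin 2 → ℝ)) (hT : T.Finite) :
    ∃ t : ℝ, (z + t • v) ∈ epsNbhd C ε ∧ (z + t • v) ∉ T := by
  have hv0 := euclNorm_pos' hv
  have hinj : Function.Injective fun t : ℝ => z + t • v := by
    intro s t h
    have h2 : s • v = t • v := add_left_cancel h
    exact smul_left_injective ℝ hv h2
  have hfin : ((fun t : ℝ => z + t • v) ⁻¹' T).Finite := hT.preimage hinj.injOn
  have hicc : (Set.Icc (0:ℝ) (ε / euclNorm v)).Infinite :=
    Set.Icc_infinite (by positivity)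
  obtain ⟨t, ht⟩ := (hicc.diff hfin).nonempty
  refine ⟨t, ⟨z, hzC, ?_⟩, ht.2⟩
  have h3 : z + t • v - z = t • v := add_sub_cancel_left z (t • v)
  rw [h3, euclNorm_smul', abs_of_nonneg ht.1.1]
  calc t * euclNorm v ≤ (ε / euclNorm v) * euclNorm v := by nlinarith [ht.1.2]
  _ = ε := by field_simp

lemma solve_line (x : Fin 4 → Fin 2 → ℝ) (g : Fin 2 → ℝ) (c ε : ℝ) (hε : 0 < ε)
    (S : Set (Fin 2 → ℝ)) (hS : S.Finite) (m n : Fin 4)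
    (hm : wedge2 g (x m) ≤ c) (hn : c ≤ wedge2 g (x n)) :
    ∃ y, y ∈ epsNbhd (convexHull ℝ (Set.range x)) ε ∧ y ∉ S ∧ y ∉ Set.range x ∧
      wedge2 g y = c := by
  set a := wedge2 g (x m) with ha
  set b := wedge2 g (x n) with hb
  obtain ⟨t0, ht0, ht1, htc⟩ : ∃ t0 : ℝ, 0 ≤ t0 ∧ t0 ≤ 1 ∧ a + t0 * (b - a) = c := by
    by_cases hab : b = a
    · refine ⟨0, le_refl 0, zero_le_one, ?_⟩
      rw [hab] at hn; linarith
    · have hba : 0 < b - a := by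
        rcases lt_or_ge a b with h | h
        · linarith
        · exact absurd (le_antisymm h (by linarith)) hab
      refine ⟨(c - a) / (b - a), div_nonneg (by linarith) hba.le, ?_, ?_⟩
      · rw [div_le_one hba]; linarith
      · field_simp; ring
  set z := (1 - t0) • x m + t0 • x n with hzdef
  have hzc : wedge2 g z = c := by
    have h : wedge2 g z = (1 - t0) * a + t0 * b := by
      simp only [hzdef, ha, hb, wedge2, Pi.add_apply, Pi.smul_apply, smul_eq_mul]
      ring
    rw [h]; linarith
  have hzhull : z ∈ convexHull ℝ (Set.range x) := by
    have hxm : x m ∈ convexHull ℝ (Set.range x) := subset_convexHull ℝ _ ⟨m, rfl⟩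
    have hxn : x n ∈ convexHull ℝ (Set.range x) := subset_convexHull ℝ _ ⟨n, rfl⟩
    exact (convex_convexHull ℝ _) hxm hxn (by linarith) ht0 (by ring)
  have hTfin : (S ∪ Set.range x).Finite := hS.union (Set.finite_range x)
  by_cases hg : g = 0
  · have hc : c = 0 := by
      have ha0 : a = 0 := by simp [ha, hg, wedge2]
      have hb0 : b = 0 := by simp [hb, hg, wedge2]
      linarith
    have hv : (![1,0] : Fin 2 → ℝ) ≠ 0 := by
      intro h; have := congrFun h 0; simp at this
    obtain ⟨t, hmem, hnot⟩ := pick_point z ![1,0] hv _ hzhull ε hε _ hTfin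
    exact ⟨z + t • ![1,0], hmem, fun h => hnot (Or.inl h), fun h => hnot (Or.inr h),
      by simp [wedge2, hg, hc]⟩
  · obtain ⟨t, hmem, hnot⟩ := pick_point z g hg _ hzhull ε hε _ hTfin
    refine ⟨z + t • g, hmem, fun h => hnot (Or.inl h), fun h => hnot (Or.inr h), ?_⟩
    have h : wedge2 g (z + t • g) = wedge2 g z := by
      simp only [wedge2, Pi.add_apply, Pi.smul_apply, smul_eq_mul]; ring
    rw [h, hzc]

/-- for any balanced system of four forces in the plane there is a
point `y⋆` near the convex hull of the supports, avoiding a finite set and the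
supports, at which two of the forces can be balanced by `-(fᵢ + fⱼ)`. -/
theorem four_forces_partial_balance (x f : Fin 4 → Fin 2 → ℝ)
    (hbal : (∑ i, f i) = 0 ∧ ∑ i, wedge2 (x i) (f i) = 0)
    (ε : ℝ) (hε : 0 < ε) (S : Set (Fin 2 → ℝ)) (hS : S.Finite) :
    ∃ y : Fin 2 → ℝ,
      y ∈ epsNbhd (convexHull ℝ (Set.range x)) ε ∧
      y ∉ S ∧ y ∉ Set.range x ∧
      ∃ i j : Fin 4, i ≠ j ∧
        wedge2 (f i) (x i) + wedge2 (f j) (x j) - wedge2 (f i + f j) y = 0 := by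
  have h0a : f 0 0 + f 1 0 + f 2 0 + f 3 0 = 0 := by
    have h := congrFun hbal.1 0
    simpa [Fin.sum_univ_four] using h
  have h0b : f 0 1 + f 1 1 + f 2 1 + f 3 1 = 0 := by
    have h := congrFun hbal.1 1
    simpa [Fin.sum_univ_four] using h
  have h2e : (x 0 0 * f 0 1 - x 0 1 * f 0 0) + (x 1 0 * f 1 1 - x 1 1 * f 1 0)
      + (x 2 0 * f 2 1 - x 2 1 * f 2 0) + (x 3 0 * f 3 1 - x 3 1 * f 3 0) = 0 := by
    have h := hbal.2
    simp [Fin.sum_univ_four, wedge2] at h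
    linarith
  have r0 : Vv x f 1 0 + Vv x f 2 0 + Vv x f 3 0 = 0 := by
    simp only [Vv, wedge2, Pi.add_apply]
    linear_combination (x 0 1) * h0a - (x 0 0) * h0b + h2e
  have r1 : Vv x f 1 1 - Vv x f 2 1 - Vv x f 3 1 = 0 := by
    simp only [Vv, wedge2, Pi.add_apply]
    linear_combination (-(x 1 1)) * h0a + (x 1 0) * h0b - h2e
  have r2 : -Vv x f 1 2 + Vv x f 2 2 - Vv x f 3 2 = 0 := by
    simp only [Vv, wedge2, Pi.add_apply]
    linear_combination (-(x 2 1)) * h0a + (x 2 0) * h0b - h2e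
  have r3 : -Vv x f 1 3 - Vv x f 2 3 + Vv x f 3 3 = 0 := by
    simp only [Vv, wedge2, Pi.add_apply]
    linear_combination (-(x 3 1)) * h0a + (x 3 0) * h0b - h2e
  have trich : ∀ p : Fin 4, (∃ m n : Fin 4, Vv x f p m ≤ 0 ∧ 0 ≤ Vv x f p n) ∨
      (∀ m, 0 < Vv x f p m) ∨ (∀ m, Vv x f p m < 0) := by
    intro p
    by_cases h1 : ∃ m, Vv x f p m ≤ 0
    · by_cases h2 : ∃ n, (0:ℝ) ≤ Vv x f p n
      · obtain ⟨m, hm⟩ := h1; obtain ⟨n, hn⟩ := h2; exact Or.inl ⟨m, n, hm, hn⟩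
      · push_neg at h2; exact Or.inr (Or.inr h2)
    · push_neg at h1; exact Or.inr (Or.inl h1)
  have main : ∃ p : Fin 4, p ≠ 0 ∧ ∃ m n : Fin 4, Vv x f p m ≤ 0 ∧ 0 ≤ Vv x f p n := by
    rcases trich 1 with hA | hA | hA
    · exact ⟨1, by decide, hA⟩
    · rcases trich 2 with hB | hB | hB
      · exact ⟨2, by decide, hB⟩
      · rcases trich 3 with hC | hC | hC
        · exact ⟨3, by decide, hC⟩
        · exfalso; linarith [hA 0, hB 0, hC 0]
        · exfalso; linarith [hA 3, hB 3, hC 3]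
      · rcases trich 3 with hC | hC | hC
        · exact ⟨3, by decide, hC⟩
        · exfalso; linarith [hA 2, hB 2, hC 2]
        · exfalso; linarith [hA 1, hB 1, hC 1]
    · rcases trich 2 with hB | hB | hB
      · exact ⟨2, by decide, hB⟩
      · rcases trich 3 with hC | hC | hC
        · exact ⟨3, by decide, hC⟩
        · exfalso; linarith [hA 1, hB 1, hC 1]
        · exfalso; linarith [hA 2, hB 2, hC 2]
      · rcases trich 3 with hC | hC | hC
        · exact ⟨3, by decide, hC⟩
        · exfalso; linarith [hA 3, hB 3, hC 3]
        · exfalso; linarith [hA 0, hB 0, hC 0]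
  obtain ⟨p, hp, m, n, hmle, hnge⟩ := main
  obtain ⟨y, hy1, hy2, hy3, hyc⟩ := solve_line x (f 0 + f p)
    (wedge2 (f 0) (x 0) + wedge2 (f p) (x p)) ε hε S hS m n
    (by unfold Vv at hmle; linarith) (by unfold Vv at hnge; linarith)
  exact ⟨y, hy1, hy2, hy3, 0, p, Ne.symm hp, by linarith⟩
end
end

section
/- Let B be a set of terminal positions in ℝ^d (d = 2 or 3), and let two spring networks N₁ and N₂ have their terminal nodes at exactly these positions and have disjoint sets of interior nodes (all node positions of both networks pairwise distinct). Form the combined network whose node set is B together with the interior nodes of both networks, whose spring constant between two terminal nodes is the sum of the corresponding constants in N₁ and N₂, whose spring constants involving an interior node of N₁ (respectively N₂) are those of N₁ (respectively N₂), and whose spring constant between an interior node of N₁ and an interior node of N₂ is zero. Then the static response matrix of the combined network at the terminals B equals W₁ + W₂, where W₁, W₂ are the static response matrices of N₁, N₂. -/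
open scoped BigOperators
open Matrix

noncomputable section

section AuxLemmas

lemma mpinv_eq {n : Type*} [Fintype n] [DecidableEq n] {A X : Matrix n n ℝ}
    (h1 : A * X * A = A) (h2 : X * A * X = X)
    (h3 : (A * X)ᵀ = A * X) (h4 : (X * A)ᵀ = X * A) :
    mpinv A = X := by
  have hex : ∃ Y : Matrix n n ℝ,
      A * Y * A = A ∧ Y * A * Y = Y ∧ (A * Y)ᵀ = A * Y ∧ (Y * A)ᵀ = Y * A :=
    ⟨X, h1, h2, h3, h4⟩
  rw [mpinv, dif_pos hex]
  obtain ⟨g1, g2, g3, g4⟩ := hex.choose_spec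
  set Y := hex.choose with hY
  have q : (A * Y) * (A * X) = A * X := by rw [← mul_assoc, mul_assoc A Y A, ← mul_assoc, g1]
  have p : (A * X) * (A * Y) = A * Y := by rw [← mul_assoc, mul_assoc A X A, ← mul_assoc, h1]
  have hAXY : A * X = A * Y := by
    calc A * X = (A * X)ᵀ := h3.symm
    _ = ((A * Y) * (A * X))ᵀ := by rw [q]
    _ = (A * X)ᵀ * (A * Y)ᵀ := by rw [transpose_mul]
    _ = (A * X) * (A * Y) := by rw [h3, g3]
    _ = A * Y := p
  have q' : (X * A) * (Y * A) = X * A := by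
    rw [mul_assoc, ← mul_assoc A Y A, g1]
  have p'' : (Y * A) * (X * A) = Y * A := by
    rw [mul_assoc, ← mul_assoc A X A, h1]
  have hXA : X * A = Y * A := by
    calc X * A = (X * A)ᵀ := h4.symm
    _ = ((X * A) * (Y * A))ᵀ := by rw [q']
    _ = (Y * A)ᵀ * (X * A)ᵀ := by rw [transpose_mul]
    _ = (Y * A) * (X * A) := by rw [h4, g4]
    _ = Y * A := p''
  calc Y = Y * A * Y := g2.symm
  _ = (X * A) * Y := by rw [hXA]
  _ = X * (A * Y) := by rw [mul_assoc]
  _ = X * (A * X) := by rw [← hAXY]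
  _ = X := by rw [← mul_assoc, h2]

lemma exists_pinv_of_symm {n : Type*} [Fintype n] [DecidableEq n]
    {A : Matrix n n ℝ} (hA : Aᵀ = A) :
    ∃ X : Matrix n n ℝ,
      A * X * A = A ∧ X * A * X = X ∧ (A * X)ᵀ = A * X ∧ (X * A)ᵀ = X * A := by
  have hH : A.IsHermitian := by
    rwa [Matrix.IsHermitian, Matrix.conjTranspose_eq_transpose_of_trivial]
  set U : Matrix n n ℝ := (hH.eigenvectorUnitary : Matrix n n ℝ) with hUdef
  have hU1 : U * star U = 1 := Matrix.mem_unitaryGroup_iff.mp hH.eigenvectorUnitary.2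
  have hU2 : star U * U = 1 := Matrix.mem_unitaryGroup_iff'.mp hH.eigenvectorUnitary.2
  set f : n → ℝ := RCLike.ofReal ∘ hH.eigenvalues with hfdef
  have hspec : A = U * Matrix.diagonal f * star U := hH.spectral_theorem
  have hsU : star U = Uᵀ := by
    rw [Matrix.star_eq_conjTranspose, Matrix.conjTranspose_eq_transpose_of_trivial]
  have key : ∀ M N : Matrix n n ℝ,
      (U * M * star U) * (U * N * star U) = U * (M * N) * star U := by
    intro M N
    calc (U * M * star U) * (U * N * star U)
        = U * M * ((star U * U) * (N * star U)) := by
          simp only [mul_assoc]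
    _ = U * (M * N) * star U := by rw [hU2, one_mul]; simp only [mul_assoc]
  have symlem : ∀ v : n → ℝ,
      (U * Matrix.diagonal v * star U)ᵀ = U * Matrix.diagonal v * star U := by
    intro v
    rw [hsU, transpose_mul, transpose_mul, transpose_transpose, diagonal_transpose,
      mul_assoc]
  have hd1 : Matrix.diagonal f * Matrix.diagonal (fun i => (f i)⁻¹) * Matrix.diagonal f
      = Matrix.diagonal f := by
    rw [diagonal_mul_diagonal, diagonal_mul_diagonal]
    have hfun : (fun i => f i * (f i)⁻¹ * f i) = f := by
      funext i
      rcases eq_or_ne (f i) 0 with h | h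
      · simp [h]
      · rw [mul_inv_cancel₀ h, one_mul]
    rw [hfun]
  have hd2 : Matrix.diagonal (fun i => (f i)⁻¹) * Matrix.diagonal f
        * Matrix.diagonal (fun i => (f i)⁻¹) = Matrix.diagonal (fun i => (f i)⁻¹) := by
    rw [diagonal_mul_diagonal, diagonal_mul_diagonal]
    have hfun : (fun i => (f i)⁻¹ * f i * (f i)⁻¹) = fun i => (f i)⁻¹ := by
      funext i
      rcases eq_or_ne (f i) 0 with h | h
      · simp [h]
      · rw [inv_mul_cancel₀ h, one_mul]
    rw [hfun]
  refine ⟨U * Matrix.diagonal (fun i => (f i)⁻¹) * star U, ?_, ?_, ?_, ?_⟩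
  · rw [hspec, key, key, hd1]
  · rw [hspec, key, key, hd2]
  · rw [hspec, key, diagonal_mul_diagonal]; exact symlem _
  · rw [hspec, key, diagonal_mul_diagonal]; exact symlem _

lemma mpinv_spec_of_symm {n : Type*} [Fintype n] [DecidableEq n]
    {A : Matrix n n ℝ} (hA : Aᵀ = A) :
    A * mpinv A * A = A ∧ mpinv A * A * mpinv A = mpinv A ∧
      (A * mpinv A)ᵀ = A * mpinv A ∧ (mpinv A * A)ᵀ = mpinv A * A := by
  obtain ⟨X, h1, h2, h3, h4⟩ := exists_pinv_of_symm hA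
  rw [mpinv_eq h1 h2 h3 h4]
  exact ⟨h1, h2, h3, h4⟩

lemma stiffness_apply_ne {d : ℕ} {ι : Type*} [Fintype ι] [DecidableEq ι]
    (x : ι → Fin d → ℝ) (k : ι → ι → ℝ) {i j : ι} (h : i ≠ j) (a b : Fin d) :
    stiffness x k (i, a) (j, b)
      = -(k i j * (unitDir (x i) (x j) a * unitDir (x i) (x j) b)) := by
  simp [stiffness, h]

lemma stiffness_apply_eq {d : ℕ} {ι : Type*} [Fintype ι] [DecidableEq ι]
    (x : ι → Fin d → ℝ) (k : ι → ι → ℝ) (i : ι) (a b : Fin d) :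
    stiffness x k (i, a) (i, b)
      = ∑ j ∈ Finset.univ.filter (fun j => j ≠ i),
          k i j * (unitDir (x i) (x j) a * unitDir (x i) (x j) b) := by
  simp [stiffness]

lemma enorm_sub_symm {d : ℕ} (p q : Fin d → ℝ) : euclNorm (p - q) = euclNorm (q - p) := by
  unfold euclNorm
  congr 1
  apply Finset.sum_congr rfl
  intro a _
  rw [Pi.sub_apply, Pi.sub_apply]
  ring

lemma unitDir_mul_symm {d : ℕ} (p q : Fin d → ℝ) (a b : Fin d) :
    unitDir q p a * unitDir q p b = unitDir p q a * unitDir p q b := by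
  unfold unitDir
  rw [enorm_sub_symm p q]
  ring

lemma stiffness_transpose {d : ℕ} {ι : Type*} [Fintype ι] [DecidableEq ι]
    (x : ι → Fin d → ℝ) (k : ι → ι → ℝ) (hk : ∀ i j, k i j = k j i) :
    (stiffness x k)ᵀ = stiffness x k := by
  ext ⟨i, a⟩ ⟨j, b⟩
  rw [transpose_apply]
  rcases eq_or_ne i j with rfl | h
  · rw [stiffness_apply_eq, stiffness_apply_eq]
    exact Finset.sum_congr rfl fun c _ => by ring
  · rw [stiffness_apply_ne x k h.symm, stiffness_apply_ne x k h, hk j i,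
      unitDir_mul_symm (x i) (x j) b a]
    ring

lemma sum_sumtype_filter_inl {α β : Type*} [Fintype α] [Fintype β]
    [DecidableEq α] [DecidableEq β] (a0 : α) (f : α ⊕ β → ℝ) :
    ∑ j ∈ Finset.univ.filter (fun j => j ≠ Sum.inl a0), f j
      = (∑ c ∈ Finset.univ.filter (fun c => c ≠ a0), f (Sum.inl c))
        + ∑ i : β, f (Sum.inr i) := by
  rw [Finset.sum_filter, Finset.sum_filter, Fintype.sum_sum_type]
  congr 1
  all_goals exact Finset.sum_congr rfl fun c _ => by simp

lemma sum_sumtype_filter_inr {α β : Type*} [Fintype α] [Fintype β]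
    [DecidableEq α] [DecidableEq β] (b0 : β) (f : α ⊕ β → ℝ) :
    ∑ j ∈ Finset.univ.filter (fun j => j ≠ Sum.inr b0), f j
      = (∑ c : α, f (Sum.inl c))
        + ∑ i ∈ Finset.univ.filter (fun i => i ≠ b0), f (Sum.inr i) := by
  rw [Finset.sum_filter, Finset.sum_filter, Fintype.sum_sum_type]
  congr 1
  all_goals exact Finset.sum_congr rfl fun c _ => by simp

end AuxLemmas

/-- superposition principle: the static response of the union of
two networks sharing the same terminals (and with disjoint interior nodes) is
the sum of the two static responses. -/
theorem superposition_principle {d : ℕ} (hd : d = 2 ∨ d = 3)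
    {B I₁ I₂ : Type*} [Fintype B] [Fintype I₁] [Fintype I₂]
    [DecidableEq B] [DecidableEq I₁] [DecidableEq I₂]
    (xB : B → Fin d → ℝ) (xI₁ : I₁ → Fin d → ℝ) (xI₂ : I₂ → Fin d → ℝ)
    (k₁ : (B ⊕ I₁) → (B ⊕ I₁) → ℝ) (k₂ : (B ⊕ I₂) → (B ⊕ I₂) → ℝ)
    (hnet₁ : IsSpringNetwork (Sum.elim xB xI₁) k₁)
    (hnet₂ : IsSpringNetwork (Sum.elim xB xI₂) k₂)
    (hdistinct : Function.Injective (Sum.elim xB (Sum.elim xI₁ xI₂)))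
    (k : (B ⊕ (I₁ ⊕ I₂)) → (B ⊕ (I₁ ⊕ I₂)) → ℝ)
    (hkBB : ∀ b b', k (Sum.inl b) (Sum.inl b') =
      k₁ (Sum.inl b) (Sum.inl b') + k₂ (Sum.inl b) (Sum.inl b'))
    (hkBI₁ : ∀ b i, k (Sum.inl b) (Sum.inr (Sum.inl i)) = k₁ (Sum.inl b) (Sum.inr i))
    (hkI₁B : ∀ i b, k (Sum.inr (Sum.inl i)) (Sum.inl b) = k₁ (Sum.inr i) (Sum.inl b))
    (hkBI₂ : ∀ b i, k (Sum.inl b) (Sum.inr (Sum.inr i)) = k₂ (Sum.inl b) (Sum.inr i))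
    (hkI₂B : ∀ i b, k (Sum.inr (Sum.inr i)) (Sum.inl b) = k₂ (Sum.inr i) (Sum.inl b))
    (hkI₁I₁ : ∀ i i', k (Sum.inr (Sum.inl i)) (Sum.inr (Sum.inl i')) =
      k₁ (Sum.inr i) (Sum.inr i'))
    (hkI₂I₂ : ∀ i i', k (Sum.inr (Sum.inr i)) (Sum.inr (Sum.inr i')) =
      k₂ (Sum.inr i) (Sum.inr i'))
    (hkI₁I₂ : ∀ i i', k (Sum.inr (Sum.inl i)) (Sum.inr (Sum.inr i')) = 0)
    (hkI₂I₁ : ∀ i i', k (Sum.inr (Sum.inr i)) (Sum.inr (Sum.inl i')) = 0) :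
    staticResponse (Sum.elim xB (Sum.elim xI₁ xI₂)) k =
      staticResponse (Sum.elim xB xI₁) k₁ + staticResponse (Sum.elim xB xI₂) k₂ := by
  
  obtain ⟨-, hk1sym, -⟩ := hnet₁
  obtain ⟨-, hk2sym, -⟩ := hnet₂
  simp only [staticResponse, schurResp]
  set K := stiffness (Sum.elim xB (Sum.elim xI₁ xI₂)) k with hK
  set K₁ := stiffness (Sum.elim xB xI₁) k₁ with hK₁
  set K₂ := stiffness (Sum.elim xB xI₂) k₂ with hK₂
  set A₁ := blk K₁ Sum.inr Sum.inr with hA₁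
  set A₂ := blk K₂ Sum.inr Sum.inr with hA₂
  set e : (I₁ ⊕ I₂) × Fin d ≃ (I₁ × Fin d) ⊕ (I₂ × Fin d) :=
    Equiv.sumProdDistrib I₁ I₂ (Fin d) with he
  have hBB : blk K Sum.inl Sum.inl = blk K₁ Sum.inl Sum.inl + blk K₂ Sum.inl Sum.inl := by
    ext ⟨b, a⟩ ⟨b', a'⟩
    rw [hK, hK₁, hK₂]
    simp only [blk, Matrix.submatrix_apply, Prod.map, id, Matrix.add_apply]
    rcases eq_or_ne b b' with rfl | hbb
    · rw [stiffness_apply_eq, stiffness_apply_eq, stiffness_apply_eq,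
        sum_sumtype_filter_inl, sum_sumtype_filter_inl, sum_sumtype_filter_inl,
        Fintype.sum_sum_type]
      simp only [Sum.elim_inl, Sum.elim_inr, hkBB, hkBI₁, hkBI₂]
      rw [show (∑ c ∈ Finset.univ.filter (fun c => c ≠ b),
            (k₁ (Sum.inl b) (Sum.inl c) + k₂ (Sum.inl b) (Sum.inl c)) *
              (unitDir (xB b) (xB c) a * unitDir (xB b) (xB c) a'))
          = (∑ c ∈ Finset.univ.filter (fun c => c ≠ b),
              k₁ (Sum.inl b) (Sum.inl c) * (unitDir (xB b) (xB c) a * unitDir (xB b) (xB c) a'))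
            + ∑ c ∈ Finset.univ.filter (fun c => c ≠ b),
              k₂ (Sum.inl b) (Sum.inl c) * (unitDir (xB b) (xB c) a * unitDir (xB b) (xB c) a')
          from by rw [← Finset.sum_add_distrib]; exact Finset.sum_congr rfl fun c _ => add_mul _ _ _]
      ring
    · have h1 : (Sum.inl b : B ⊕ (I₁ ⊕ I₂)) ≠ Sum.inl b' := fun h => hbb (Sum.inl_injective h)
      have h2 : (Sum.inl b : B ⊕ I₁) ≠ Sum.inl b' := fun h => hbb (Sum.inl_injective h)
      have h3 : (Sum.inl b : B ⊕ I₂) ≠ Sum.inl b' := fun h => hbb (Sum.inl_injective h)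
      rw [stiffness_apply_ne _ _ h1, stiffness_apply_ne _ _ h2, stiffness_apply_ne _ _ h3]
      simp only [Sum.elim_inl, hkBB]
      ring
  have hC : blk K Sum.inl Sum.inr
      = (fromCols (blk K₁ Sum.inl Sum.inr) (blk K₂ Sum.inl Sum.inr)).submatrix id ⇑e := by
    ext ⟨b, a⟩ ⟨i, a'⟩
    rcases i with i | i
    · have h1 : (Sum.inl b : B ⊕ (I₁ ⊕ I₂)) ≠ Sum.inr (Sum.inl i) := Sum.inl_ne_inr
      have h2 : (Sum.inl b : B ⊕ I₁) ≠ Sum.inr i := Sum.inl_ne_inr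
      simp only [he, blk, Matrix.submatrix_apply, Prod.map, id,
        Equiv.sumProdDistrib_apply_left, fromCols_apply_inl]
      rw [hK, hK₁, stiffness_apply_ne _ _ h1, stiffness_apply_ne _ _ h2]
      simp [hkBI₁]
    · have h1 : (Sum.inl b : B ⊕ (I₁ ⊕ I₂)) ≠ Sum.inr (Sum.inr i) := Sum.inl_ne_inr
      have h2 : (Sum.inl b : B ⊕ I₂) ≠ Sum.inr i := Sum.inl_ne_inr
      simp only [he, blk, Matrix.submatrix_apply, Prod.map, id,
        Equiv.sumProdDistrib_apply_right, fromCols_apply_inr]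
      rw [hK, hK₂, stiffness_apply_ne _ _ h1, stiffness_apply_ne _ _ h2]
      simp [hkBI₂]
  have hR : blk K Sum.inr Sum.inl
      = (fromRows (blk K₁ Sum.inr Sum.inl) (blk K₂ Sum.inr Sum.inl)).submatrix ⇑e id := by
    ext ⟨i, a⟩ ⟨b, a'⟩
    rcases i with i | i
    · have h1 : (Sum.inr (Sum.inl i) : B ⊕ (I₁ ⊕ I₂)) ≠ Sum.inl b := Sum.inr_ne_inl
      have h2 : (Sum.inr i : B ⊕ I₁) ≠ Sum.inl b := Sum.inr_ne_inl
      simp only [he, blk, Matrix.submatrix_apply, Prod.map, id,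
        Equiv.sumProdDistrib_apply_left, fromRows_apply_inl]
      rw [hK, hK₁, stiffness_apply_ne _ _ h1, stiffness_apply_ne _ _ h2]
      simp [hkI₁B]
    · have h1 : (Sum.inr (Sum.inr i) : B ⊕ (I₁ ⊕ I₂)) ≠ Sum.inl b := Sum.inr_ne_inl
      have h2 : (Sum.inr i : B ⊕ I₂) ≠ Sum.inl b := Sum.inr_ne_inl
      simp only [he, blk, Matrix.submatrix_apply, Prod.map, id,
        Equiv.sumProdDistrib_apply_right, fromRows_apply_inr]
      rw [hK, hK₂, stiffness_apply_ne _ _ h1, stiffness_apply_ne _ _ h2]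
      simp [hkI₂B]
  have hAb : blk K Sum.inr Sum.inr = (fromBlocks A₁ 0 0 A₂).submatrix ⇑e ⇑e := by
    ext ⟨i, a⟩ ⟨j, b⟩
    rcases i with i | i <;> rcases j with j | j
    · simp only [he, hA₁, blk, Matrix.submatrix_apply, Prod.map, id,
        Equiv.sumProdDistrib_apply_left, fromBlocks_apply₁₁]
      rw [hK, hK₁]
      rcases eq_or_ne i j with rfl | hij
      · rw [stiffness_apply_eq, stiffness_apply_eq, sum_sumtype_filter_inr,
          sum_sumtype_filter_inr, sum_sumtype_filter_inl]
        simp only [Sum.elim_inl, Sum.elim_inr, hkI₁B, hkI₁I₁, hkI₁I₂, zero_mul,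
          Finset.sum_const_zero, add_zero]
      · have h1 : (Sum.inr (Sum.inl i) : B ⊕ (I₁ ⊕ I₂)) ≠ Sum.inr (Sum.inl j) := by
          simpa using hij
        have h2 : (Sum.inr i : B ⊕ I₁) ≠ Sum.inr j := by simpa using hij
        rw [stiffness_apply_ne _ _ h1, stiffness_apply_ne _ _ h2]
        simp [hkI₁I₁]
    · have h1 : (Sum.inr (Sum.inl i) : B ⊕ (I₁ ⊕ I₂)) ≠ Sum.inr (Sum.inr j) := by simp
      simp only [he, blk, Matrix.submatrix_apply, Prod.map, id,
        Equiv.sumProdDistrib_apply_left, Equiv.sumProdDistrib_apply_right,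
        fromBlocks_apply₁₂, Matrix.zero_apply]
      rw [hK, stiffness_apply_ne _ _ h1]
      simp [hkI₁I₂]
    · have h1 : (Sum.inr (Sum.inr i) : B ⊕ (I₁ ⊕ I₂)) ≠ Sum.inr (Sum.inl j) := by simp
      simp only [he, blk, Matrix.submatrix_apply, Prod.map, id,
        Equiv.sumProdDistrib_apply_left, Equiv.sumProdDistrib_apply_right,
        fromBlocks_apply₂₁, Matrix.zero_apply]
      rw [hK, stiffness_apply_ne _ _ h1]
      simp [hkI₂I₁]
    · simp only [he, hA₂, blk, Matrix.submatrix_apply, Prod.map, id,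
        Equiv.sumProdDistrib_apply_right, fromBlocks_apply₂₂]
      rw [hK, hK₂]
      rcases eq_or_ne i j with rfl | hij
      · rw [stiffness_apply_eq, stiffness_apply_eq, sum_sumtype_filter_inr,
          sum_sumtype_filter_inr, sum_sumtype_filter_inr]
        simp only [Sum.elim_inl, Sum.elim_inr, hkI₂B, hkI₂I₂, hkI₂I₁, zero_mul,
          Finset.sum_const_zero, zero_add]
      · have h1 : (Sum.inr (Sum.inr i) : B ⊕ (I₁ ⊕ I₂)) ≠ Sum.inr (Sum.inr j) := by
          simpa using hij
        have h2 : (Sum.inr i : B ⊕ I₂) ≠ Sum.inr j := by simpa using hij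
        rw [stiffness_apply_ne _ _ h1, stiffness_apply_ne _ _ h2]
        simp [hkI₂I₂]
  have hsymm₁ : A₁ᵀ = A₁ := by
    rw [hA₁, blk, transpose_submatrix, hK₁, stiffness_transpose _ _ hk1sym]
  have hsymm₂ : A₂ᵀ = A₂ := by
    rw [hA₂, blk, transpose_submatrix, hK₂, stiffness_transpose _ _ hk2sym]
  obtain ⟨ha1, hb1, hc1, hd1⟩ := mpinv_spec_of_symm hsymm₁
  obtain ⟨ha2, hb2, hc2, hd2⟩ := mpinv_spec_of_symm hsymm₂
  have hFB1 : fromBlocks A₁ 0 0 A₂ * fromBlocks (mpinv A₁) 0 0 (mpinv A₂)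
      * fromBlocks A₁ 0 0 A₂ = fromBlocks A₁ 0 0 A₂ := by
    rw [fromBlocks_multiply, fromBlocks_multiply]
    simp only [Matrix.mul_zero, Matrix.zero_mul, add_zero, zero_add, ha1, ha2]
  have hFB2 : fromBlocks (mpinv A₁) 0 0 (mpinv A₂) * fromBlocks A₁ 0 0 A₂
      * fromBlocks (mpinv A₁) 0 0 (mpinv A₂) = fromBlocks (mpinv A₁) 0 0 (mpinv A₂) := by
    rw [fromBlocks_multiply, fromBlocks_multiply]
    simp only [Matrix.mul_zero, Matrix.zero_mul, add_zero, zero_add, hb1, hb2]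
  have hFB3 : (fromBlocks A₁ 0 0 A₂ * fromBlocks (mpinv A₁) 0 0 (mpinv A₂))ᵀ
      = fromBlocks A₁ 0 0 A₂ * fromBlocks (mpinv A₁) 0 0 (mpinv A₂) := by
    rw [fromBlocks_multiply]
    simp only [Matrix.mul_zero, Matrix.zero_mul, add_zero, zero_add]
    rw [fromBlocks_transpose, hc1, hc2]
    simp only [transpose_zero]
  have hFB4 : (fromBlocks (mpinv A₁) 0 0 (mpinv A₂) * fromBlocks A₁ 0 0 A₂)ᵀ
      = fromBlocks (mpinv A₁) 0 0 (mpinv A₂) * fromBlocks A₁ 0 0 A₂ := by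
    rw [fromBlocks_multiply]
    simp only [Matrix.mul_zero, Matrix.zero_mul, add_zero, zero_add]
    rw [fromBlocks_transpose, hd1, hd2]
    simp only [transpose_zero]
  have hmp : mpinv (blk K Sum.inr Sum.inr)
      = (fromBlocks (mpinv A₁) 0 0 (mpinv A₂)).submatrix ⇑e ⇑e := by
    rw [hAb]
    apply mpinv_eq
    · rw [submatrix_mul_equiv, submatrix_mul_equiv, hFB1]
    · rw [submatrix_mul_equiv, submatrix_mul_equiv, hFB2]
    · rw [submatrix_mul_equiv, transpose_submatrix, hFB3]
    · rw [submatrix_mul_equiv, transpose_submatrix, hFB4]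
  rw [hBB, hC, hR, hmp, submatrix_mul_equiv, submatrix_mul_equiv, submatrix_id_id,
    fromCols_mul_fromBlocks, fromCols_mul_fromRows]
  simp only [Matrix.mul_zero, Matrix.zero_mul, add_zero, zero_add]
  abel
end
end
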